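/- Let P be a probability distribution on X ⊆ B_d, let p ≥ 1 be a real, let k ≥ 1, and let x ↦ x̃ be a measurable map on X with x̃ ∈ B_d and κ(x, x̃) ≤ s for all x ∈ X. Then for every k-partition 𝒞 of X, |cost(𝒞) − c̃ost(𝒞)| ≤ p·s, where c̃ost(𝒞) denotes the partition cost computed with x̃ in place of x. Consequently, if ε ∈ (0,1] and s ≤ ε·OPT/(2p), where OPT is the optimal statistical (k,p)-clustering cost of P, then (1+ε)^{−1}·cost(𝒞) ≤ c̃ost(𝒞) ≤ (1+ε)·cost(𝒞) for every k-partition 𝒞 of X. -/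

import Mathlib

open MeasureTheory

/-- `κ(x, F) = min_{f ∈ F} N (x - f)`. -/
noncomputable def setDist {d : ℕ} (N : Seminorm ℝ (Fin d → ℝ))
    (x : Fin d → ℝ) (F : Finset (Fin d → ℝ)) : ℝ :=
  sInf {r | ∃ f ∈ F, r = N (x - f)}

/-- `B_d`: the `κ`-ball of diameter 1 centered at the origin. -/
def ballD {d : ℕ} (N : Seminorm ℝ (Fin d → ℝ)) : Set (Fin d → ℝ) := {x | N x ≤ 1 / 2}

/-- The statistical partition cost of the `k`-partition (labelling) `g`, where each point
`x` is first moved to `T x` and centers range over `B_d`: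
`inf_{u⁽¹⁾,…,u⁽ᵏ⁾ ∈ B_d} E_{x∼P}[κ(T x, u^{(g x)})^p]`. -/
noncomputable def partCostVia {d k : ℕ} (N : Seminorm ℝ (Fin d → ℝ)) (p : ℝ)
    (P : Measure (Fin d → ℝ)) (T : (Fin d → ℝ) → Fin d → ℝ)
    (g : (Fin d → ℝ) → Fin k) : ℝ :=
  ⨅ u : Fin k → (ballD N), ∫ x, (N (T x - (u (g x) : Fin d → ℝ)) : ℝ) ^ p ∂P

/-- The optimal statistical `(k,p)`-clustering cost `OPT`. -/
noncomputable def clusterOPT {d : ℕ} (N : Seminorm ℝ (Fin d → ℝ)) (p : ℝ)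
    (P : Measure (Fin d → ℝ)) (k : ℕ) : ℝ :=
  sInf {r | ∃ F : Finset (Fin d → ℝ), ↑F ⊆ ballD N ∧ F.card = k ∧
    r = ∫ x, setDist N x F ^ p ∂P}

lemma seminorm_lip {d : ℕ} (N : Seminorm ℝ (Fin d → ℝ)) :
    ∃ C : ℝ, 0 ≤ C ∧ ∀ x : Fin d → ℝ, N x ≤ C * ‖x‖ := by
  refine ⟨∑ i, N (fun j => if i = j then 1 else 0),
    Finset.sum_nonneg fun i _ => apply_nonneg _ _, ?_⟩
  intro x
  calc N x = N (∑ i, x i • fun j => if i = j then (1:ℝ) else 0) := by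
        rw [← pi_eq_sum_univ x]
    _ ≤ ∑ i, N (x i • fun j => if i = j then (1:ℝ) else 0) :=
        Finset.le_sum_of_subadditive N (map_zero N).le (map_add_le_add N) _ _
    _ ≤ ∑ i, N (fun j => if i = j then (1:ℝ) else 0) * ‖x‖ := by
        apply Finset.sum_le_sum
        intro i _
        rw [map_smul_eq_mul, mul_comm]
        exact mul_le_mul_of_nonneg_left (norm_le_pi_norm x i) (apply_nonneg _ _)
    _ = (∑ i, N (fun j => if i = j then 1 else 0)) * ‖x‖ := by rw [Finset.sum_mul]

lemma seminorm_abs_sub {d : ℕ} (N : Seminorm ℝ (Fin d → ℝ)) (a b : Fin d → ℝ) :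
    |N a - N b| ≤ N (a - b) := by
  have h1 : N a - N b ≤ N (a - b) := by
    have := map_add_le_add N (a - b) b
    simp only [sub_add_cancel] at this; linarith
  have h2 : N b - N a ≤ N (a - b) := by
    have := map_add_le_add N (b - a) a
    simp only [sub_add_cancel] at this
    have e : N (b - a) = N (a - b) := by rw [← neg_sub a b, map_neg_eq_map]
    linarith
  rw [abs_le]; constructor <;> linarith

lemma seminorm_cont {d : ℕ} (N : Seminorm ℝ (Fin d → ℝ)) : Continuous N := by
  obtain ⟨C, hC0, hC⟩ := seminorm_lip N
  have : LipschitzWith (Real.toNNReal C) N := by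
    apply LipschitzWith.of_dist_le_mul
    intro x y
    rw [Real.dist_eq, dist_eq_norm, Real.coe_toNNReal _ hC0]
    exact (seminorm_abs_sub N x y).trans (hC (x - y))
  exact this.continuous

lemma rpow_abs_diff {p : ℝ} (hp : 1 ≤ p) {a b : ℝ} (ha : a ∈ Set.Icc (0:ℝ) 1)
    (hb : b ∈ Set.Icc (0:ℝ) 1) : |a ^ p - b ^ p| ≤ p * |a - b| := by
  have key := Convex.norm_image_sub_le_of_norm_hasDerivWithin_le
    (f := fun t : ℝ => t ^ p) (f' := fun t : ℝ => p * t ^ (p - 1)) (s := Set.Icc (0:ℝ) 1)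
    (C := p)
    (fun t ht => (Real.hasDerivAt_rpow_const (Or.inr hp)).hasDerivWithinAt)
    (fun t ht => by
      rw [Real.norm_eq_abs, abs_mul, abs_of_nonneg (by linarith : (0:ℝ) ≤ p),
        abs_of_nonneg (Real.rpow_nonneg ht.1 _)]
      have : t ^ (p - 1) ≤ 1 := Real.rpow_le_one ht.1 ht.2 (by linarith)
      nlinarith)
    (convex_Icc 0 1) hb ha
  simpa [Real.norm_eq_abs] using key

/-- Discretization preserves partition costs: if `κ(x, x̃) ≤ s` on `X`, then every
`k`-partition cost changes by at most `p·s`; consequently, if `s ≤ ε·OPT/(2p)`, partition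
costs are preserved up to `1 ± ε` multiplicative factors. -/
theorem discretization_preserves_partition_costs {d k : ℕ} (hk : 1 ≤ k)
    (N : Seminorm ℝ (Fin d → ℝ)) (hNdef : ∀ x, N x = 0 → x = 0)
    (p : ℝ) (hp : 1 ≤ p)
    (P : Measure (Fin d → ℝ)) [IsProbabilityMeasure P]
    (X : Set (Fin d → ℝ)) (hX : X ⊆ ballD N) (hPX : ∀ᵐ x ∂P, x ∈ X)
    (T : (Fin d → ℝ) → Fin d → ℝ) (hTmeas : Measurable T)
    (hTball : ∀ x ∈ X, T x ∈ ballD N)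
    (s : ℝ) (hTs : ∀ x ∈ X, (N (x - T x) : ℝ) ≤ s) :
    (∀ g : (Fin d → ℝ) → Fin k, Measurable g →
      |partCostVia N p P id g - partCostVia N p P T g| ≤ p * s) ∧
    (∀ ε : ℝ, 0 < ε → ε ≤ 1 → s ≤ ε * clusterOPT N p P k / (2 * p) →
      ∀ g : (Fin d → ℝ) → Fin k, Measurable g →
        (1 + ε)⁻¹ * partCostVia N p P id g ≤ partCostVia N p P T g ∧
        partCostVia N p P T g ≤ (1 + ε) * partCostVia N p P id g) := by
  have hp0 : (0:ℝ) < p := by linarith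
  have hball0 : (0 : Fin d → ℝ) ∈ ballD N := by
    simp [ballD, map_zero]
  haveI : Nonempty (ballD N) := ⟨⟨0, hball0⟩⟩
  have hs0 : 0 ≤ s := by
    haveI : (ae P).NeBot := ae_neBot.mpr (IsProbabilityMeasure.ne_zero P)
    obtain ⟨x, hx⟩ := hPX.exists
    exact le_trans (apply_nonneg N _) (hTs x hx)
  have hIcc : ∀ a b : Fin d → ℝ, a ∈ ballD N → b ∈ ballD N →
      (N (a - b) : ℝ) ∈ Set.Icc (0:ℝ) 1 := by
    intro a b ha hb
    refine ⟨apply_nonneg _ _, ?_⟩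
    have := map_sub_le_add N a b
    have ha' : N a ≤ 1/2 := ha
    have hb' : N b ≤ 1/2 := hb
    linarith
  have hmeas : ∀ (T' : (Fin d → ℝ) → Fin d → ℝ), Measurable T' →
      ∀ (g : (Fin d → ℝ) → Fin k), Measurable g → ∀ u : Fin k → ballD N,
      Measurable (fun x => (N (T' x - (u (g x) : Fin d → ℝ)) : ℝ) ^ p) := by
    intro T' hT' g hg u
    exact (Real.continuous_rpow_const hp0.le).measurable.comp
      ((seminorm_cont N).measurable.comp
        (hT'.sub ((measurable_of_finite (fun j => (u j : Fin d → ℝ))).comp hg)))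
  have hint : ∀ (T' : (Fin d → ℝ) → Fin d → ℝ), Measurable T' →
      (∀ x ∈ X, T' x ∈ ballD N) →
      ∀ (g : (Fin d → ℝ) → Fin k), Measurable g → ∀ u : Fin k → ballD N,
      Integrable (fun x => (N (T' x - (u (g x) : Fin d → ℝ)) : ℝ) ^ p) P := by
    intro T' hT' hT'ball g hg u
    refine ⟨(hmeas T' hT' g hg u).aestronglyMeasurable,
      HasFiniteIntegral.of_bounded (C := 1) ?_⟩
    filter_upwards [hPX] with x hx
    rw [Real.norm_eq_abs, abs_of_nonneg (Real.rpow_nonneg (apply_nonneg _ _) _)]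
    exact Real.rpow_le_one (apply_nonneg _ _)
      (hIcc _ _ (hT'ball x hx) (u (g x)).2).2 hp0.le
  -- pointwise comparison of costs for a fixed choice of centers
  have hptwise : ∀ (g : (Fin d → ℝ) → Fin k), Measurable g → ∀ u : Fin k → ballD N,
      |(∫ x, (N (id x - (u (g x) : Fin d → ℝ)) : ℝ) ^ p ∂P) -
        ∫ x, (N (T x - (u (g x) : Fin d → ℝ)) : ℝ) ^ p ∂P| ≤ p * s := by
    intro g hg u
    set f : (Fin d → ℝ) → ℝ := fun x =>
      (N (id x - (u (g x) : Fin d → ℝ)) : ℝ) ^ p -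
        (N (T x - (u (g x) : Fin d → ℝ)) : ℝ) ^ p with hf
    rw [← integral_sub (hint id measurable_id (fun x hx => hX hx) g hg u)
      (hint T hTmeas hTball g hg u)]
    have habs : |∫ x, f x ∂P| ≤ ∫ x, |f x| ∂P := by
      have := norm_integral_le_integral_norm (μ := P) f
      simpa [Real.norm_eq_abs] using this
    refine habs.trans ?_
    have hmono : (∫ x, |f x| ∂P) ≤ ∫ _x, p * s ∂P := by
      apply integral_mono_of_nonneg
      · exact ae_of_all _ fun x => abs_nonneg _
      · exact integrable_const _
      · filter_upwards [hPX] with x hx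
        have h1 := hIcc x (u (g x)) (hX hx) (u (g x)).2
        have h2 := hIcc (T x) (u (g x)) (hTball x hx) (u (g x)).2
        have key := rpow_abs_diff hp h1 h2
        have htri : |(N (x - (u (g x) : Fin d → ℝ)) : ℝ) -
            N (T x - (u (g x) : Fin d → ℝ))| ≤ N (x - T x) := by
          have := seminorm_abs_sub N (x - (u (g x) : Fin d → ℝ))
            (T x - (u (g x) : Fin d → ℝ))
          simpa [sub_sub_sub_cancel_right] using this
        have hNs : (N (x - T x) : ℝ) ≤ s := hTs x hx
        have : |f x| ≤ p * |(N (x - (u (g x) : Fin d → ℝ)) : ℝ) -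
            N (T x - (u (g x) : Fin d → ℝ))| := by
          simpa [hf] using key
        refine this.trans ?_
        exact mul_le_mul_of_nonneg_left (htri.trans hNs) hp0.le
    refine hmono.trans ?_
    simp [integral_const]
  have hnonneg : ∀ (T' : (Fin d → ℝ) → Fin d → ℝ) (g : (Fin d → ℝ) → Fin k)
      (u : Fin k → ballD N),
      0 ≤ ∫ x, (N (T' x - (u (g x) : Fin d → ℝ)) : ℝ) ^ p ∂P :=
    fun T' g u => integral_nonneg fun x => Real.rpow_nonneg (apply_nonneg _ _) _
  have hbdd : ∀ (T' : (Fin d → ℝ) → Fin d → ℝ) (g : (Fin d → ℝ) → Fin k),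
      BddBelow (Set.range fun u : Fin k → ballD N =>
        ∫ x, (N (T' x - (u (g x) : Fin d → ℝ)) : ℝ) ^ p ∂P) :=
    fun T' g => ⟨0, by rintro r ⟨u, rfl⟩; exact hnonneg T' g u⟩
  have hcost_nonneg : ∀ (T' : (Fin d → ℝ) → Fin d → ℝ) (g : (Fin d → ℝ) → Fin k),
      0 ≤ partCostVia N p P T' g :=
    fun T' g => le_ciInf fun u => hnonneg T' g u
  -- Part 1
  have part1 : ∀ g : (Fin d → ℝ) → Fin k, Measurable g →
      |partCostVia N p P id g - partCostVia N p P T g| ≤ p * s := by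
    intro g hg
    have key1 : ∀ u : Fin k → ballD N, partCostVia N p P id g ≤
        (∫ x, (N (T x - (u (g x) : Fin d → ℝ)) : ℝ) ^ p ∂P) + p * s := by
      intro u
      refine le_trans (ciInf_le (hbdd id g) u) ?_
      have := hptwise g hg u
      rw [abs_sub_le_iff] at this
      linarith [this.1]
    have key2 : ∀ u : Fin k → ballD N, partCostVia N p P T g ≤
        (∫ x, (N (id x - (u (g x) : Fin d → ℝ)) : ℝ) ^ p ∂P) + p * s := by
      intro u
      refine le_trans (ciInf_le (hbdd T g) u) ?_
      have := hptwise g hg u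
      rw [abs_sub_le_iff] at this
      linarith [this.2]
    have h1 : partCostVia N p P id g - p * s ≤ partCostVia N p P T g :=
      le_ciInf fun u => by linarith [key1 u]
    have h2 : partCostVia N p P T g - p * s ≤ partCostVia N p P id g :=
      le_ciInf fun u => by linarith [key2 u]
    rw [abs_sub_le_iff]
    constructor <;> linarith
  refine ⟨part1, ?_⟩
  -- all elements of the OPT set are nonnegative
  have hsd_nonneg : ∀ (F : Finset (Fin d → ℝ)), F.Nonempty → ∀ x, 0 ≤ setDist N x F := by
    intro F hFne x
    refine le_csInf ⟨N (x - hFne.choose), ⟨hFne.choose, hFne.choose_spec, rfl⟩⟩ ?_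
    rintro b ⟨f, hf, rfl⟩
    exact apply_nonneg _ _
  have hOPTbdd : ∀ r ∈ {r | ∃ F : Finset (Fin d → ℝ), ↑F ⊆ ballD N ∧ F.card = k ∧
      r = ∫ x, setDist N x F ^ p ∂P}, (0:ℝ) ≤ r := by
    rintro r ⟨F, hFball, hFcard, rfl⟩
    have hFne : F.Nonempty := Finset.card_pos.mp (by omega)
    exact integral_nonneg fun x => Real.rpow_nonneg (hsd_nonneg F hFne x) _
  -- OPT is at most the cost of any partition
  have hOPT : ∀ g : (Fin d → ℝ) → Fin k, Measurable g →
      clusterOPT N p P k ≤ partCostVia N p P id g := by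
    intro g hg
    rcases Nat.eq_zero_or_pos d with hd | hd
    · -- d = 0: everything is zero
      subst hd
      have hzero : ∀ x u : Fin 0 → ℝ, (N (x - u) : ℝ) ^ p = 0 := by
        intro x u
        have hxu : x - u = 0 := funext fun i => i.elim0
        rw [hxu, map_zero, Real.zero_rpow hp0.ne']
      have hcost : partCostVia N p P id g = 0 := by
        have hval : ∀ u : Fin k → ballD N,
            (∫ x, (N (id x - (u (g x) : Fin 0 → ℝ)) : ℝ) ^ p ∂P) = 0 := by
          intro u
          simp only [hzero]
          exact integral_zero _ _
        rw [partCostVia]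
        simp only [hval]
        exact ciInf_const
      rw [hcost, clusterOPT]
      by_cases hne : {r | ∃ F : Finset (Fin 0 → ℝ), ↑F ⊆ ballD N ∧ F.card = k ∧
          r = ∫ x, setDist N x F ^ p ∂P}.Nonempty
      · obtain ⟨r, hr⟩ := hne
        obtain ⟨F, hFball, hFcard, hre⟩ := hr
        have hFne : F.Nonempty := Finset.card_pos.mp (by omega)
        have hsd : ∀ x, setDist N x F = 0 := by
          intro x
          rw [setDist]
          have : {r | ∃ f ∈ F, r = N (x - f)} = {0} := by
            ext r
            simp only [Set.mem_setOf_eq, Set.mem_singleton_iff]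
            constructor
            · rintro ⟨f, hf, rfl⟩
              have : x - f = 0 := funext fun i => i.elim0
              rw [this, map_zero]
            · rintro rfl
              exact ⟨hFne.choose, hFne.choose_spec, by
                have : x - hFne.choose = 0 := funext fun i => i.elim0
                rw [this, map_zero]⟩
          rw [this, csInf_singleton]
        have hr0 : r = 0 := by
          rw [hre]
          have : ∀ x, setDist N x F ^ p = 0 := fun x => by
            rw [hsd x, Real.zero_rpow hp0.ne']
          simp only [this]
          exact integral_zero _ _
        exact le_trans (csInf_le ⟨0, hOPTbdd⟩ ⟨F, hFball, hFcard, hre⟩) (le_of_eq hr0)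
      · rw [Set.not_nonempty_iff_eq_empty] at hne
        rw [hne, Real.sInf_empty]
    · -- d > 0: the ball is infinite, pad the centers to a set of size k
      classical
      set e0 : Fin d → ℝ := fun j => if (⟨0, hd⟩ : Fin d) = j then 1 else 0 with he0
      set δ : ℝ := 1 / (2 * (N e0 + 1)) with hδ
      have hNe0 : (0:ℝ) ≤ N e0 := apply_nonneg _ _
      have hδ0 : 0 < δ := by rw [hδ]; positivity
      have hinj : Set.InjOn (fun t : ℝ => t • e0) (Set.Icc 0 δ) := by
        intro t _ t' _ h
        have := congrFun h ⟨0, hd⟩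
        simpa [he0] using this
      have himg : ∀ t ∈ Set.Icc (0:ℝ) δ, t • e0 ∈ ballD N := by
        intro t ht
        have hsm : N (t • e0) = |t| * N e0 := by
          rw [map_smul_eq_mul]; rfl
        have habs : |t| = t := abs_of_nonneg ht.1
        have : N (t • e0) ≤ δ * N e0 := by
          rw [hsm, habs]
          exact mul_le_mul_of_nonneg_right ht.2 hNe0
        have hδN : δ * N e0 ≤ 1 / 2 := by
          rw [hδ, div_mul_eq_mul_div, one_mul, div_le_div_iff₀ (by positivity) (by norm_num)]
          nlinarith
        exact le_trans this hδN
      have hinf : (ballD N).Infinite := by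
        have h1 : ((fun t : ℝ => t • e0) '' Set.Icc 0 δ).Infinite :=
          (Set.Icc_infinite hδ0).image hinj
        refine h1.mono ?_
        rintro y ⟨t, ht, rfl⟩
        exact himg t ht
      refine le_ciInf fun u => ?_
      set Fu : Finset (Fin d → ℝ) := Finset.image (fun j => (u j : Fin d → ℝ)) Finset.univ
        with hFu
      have hFusub : ↑Fu ⊆ ballD N := by
        intro y hy
        simp only [hFu, Finset.coe_image, Set.mem_image] at hy
        obtain ⟨j, _, rfl⟩ := hy
        exact (u j).2
      have hcard : (↑Fu : Set (Fin d → ℝ)).ncard ≤ k := by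
        rw [Set.ncard_coe_finset]
        exact le_trans (Finset.card_image_le) (by simp)
      obtain ⟨s', hs1, hs2, hs3⟩ :=
        hinf.exists_superset_ncard_eq hFusub Fu.finite_toSet hcard
      have hs'fin : s'.Finite := Set.finite_of_ncard_ne_zero (by rw [hs3]; omega)
      set F : Finset (Fin d → ℝ) := hs'fin.toFinset with hF
      have hFcard : F.card = k := by
        rw [hF, ← Set.ncard_eq_toFinset_card s' hs'fin]; exact hs3
      have hFball : ↑F ⊆ ballD N := by
        rw [hF, Set.Finite.coe_toFinset]; exact hs2
      have hFne : F.Nonempty := Finset.card_pos.mp (by omega)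
      refine le_trans (csInf_le ⟨0, hOPTbdd⟩ ⟨F, hFball, hFcard, rfl⟩) ?_
      apply integral_mono_of_nonneg
      · exact ae_of_all _ fun x => Real.rpow_nonneg (hsd_nonneg F hFne x) _
      · exact hint id measurable_id (fun x hx => hX hx) g hg u
      · refine ae_of_all _ fun x => ?_
        have hmem : (u (g x) : Fin d → ℝ) ∈ F := by
          rw [hF, Set.Finite.mem_toFinset]
          exact hs1 (by simp [hFu])
        have hle : setDist N x F ≤ N (x - (u (g x) : Fin d → ℝ)) := by
          refine csInf_le ⟨0, ?_⟩ ⟨u (g x), hmem, rfl⟩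
          rintro r ⟨f, hf, rfl⟩
          exact apply_nonneg _ _
        simpa using Real.rpow_le_rpow (hsd_nonneg F hFne x) hle hp0.le
  -- Part 2
  intro ε hε0 hε1 hsle g hg
  have hA0 : 0 ≤ partCostVia N p P id g := hcost_nonneg id g
  have hB0 : 0 ≤ partCostVia N p P T g := hcost_nonneg T g
  have h1 := part1 g hg
  rw [abs_sub_le_iff] at h1
  have hOA := hOPT g hg
  have hps : p * s ≤ ε * partCostVia N p P id g / 2 := by
    have h2 : p * s ≤ p * (ε * clusterOPT N p P k / (2 * p)) :=
      mul_le_mul_of_nonneg_left hsle hp0.le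
    have h3 : p * (ε * clusterOPT N p P k / (2 * p)) = ε * clusterOPT N p P k / 2 := by
      field_simp
    have h4 : ε * clusterOPT N p P k / 2 ≤ ε * partCostVia N p P id g / 2 := by
      have := mul_le_mul_of_nonneg_left hOA hε0.le
      linarith
    linarith
  constructor
  · rw [inv_mul_le_iff₀ (by linarith : (0:ℝ) < 1 + ε)]
    nlinarith [h1.1, mul_le_mul_of_nonneg_left
      (show partCostVia N p P id g - ε * partCostVia N p P id g / 2 ≤ partCostVia N p P T g
        by linarith [h1.1]) hε0.le]
  · nlinarith [h1.2, mul_nonneg hε0.le hA0]
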